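/- Let Λ̃ be the expansion of a subshift Λ replacing the symbol 1 by 01. If ν is a 2l-synchronizing word of Λ̃ which neither begins with 1 nor ends with 0, then the word η^B(ν) obtained by replacing each occurrence of 01 in ν by 1 is an l-synchronizing word of Λ. -/

import Mathlib

open List

variable {A : Type*}

/-- A subshift: a closed, shift-invariant subset of `A^ℤ` (with `A` discrete). -/
def IsSubshift [TopologicalSpace A] (Λ : Set (ℤ → A)) : Prop :=
  IsClosed Λ ∧ (∀ x ∈ Λ, (fun i => x (i + 1)) ∈ Λ) ∧ (∀ x ∈ Λ, (fun i => x (i - 1)) ∈ Λ)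

/-- `w` is an admissible word of `Λ`, i.e. `w ∈ B_*(Λ)`. -/
def Adm (Λ : Set (ℤ → A)) (w : List A) : Prop :=
  ∃ x ∈ Λ, ∃ n : ℤ, ∀ i : Fin w.length, x (n + (i : ℕ)) = w.get i

/-- `Γ_l^-(μ)`: the set of admissible words `ν` of length `l` with `νμ` admissible. -/
def Gamma (Λ : Set (ℤ → A)) (l : ℕ) (μ : List A) : Set (List A) :=
  {ν | ν.length = l ∧ Adm Λ ν ∧ Adm Λ (ν ++ μ)}

/-- `μ` is an `l`-synchronizing word of `Λ`: `Γ_l^-(μ) = Γ_l^-(μω)` for all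
`ω ∈ Γ_*^+(μ)`.  Membership in `S_l(Λ)`. -/
def LSync (Λ : Set (ℤ → A)) (l : ℕ) (μ : List A) : Prop :=
  Adm Λ μ ∧ ∀ ω : List A, Adm Λ (μ ++ ω) → Gamma Λ l μ = Gamma Λ l (μ ++ ω)

/-- `ω` is an intrinsically synchronizing word of `Λ`. -/
def IntrSync (Λ : Set (ℤ → A)) (ω : List A) : Prop :=
  Adm Λ ω ∧ ∀ μ ν : List A, Adm Λ μ → Adm Λ ν → Adm Λ (μ ++ ω) → Adm Λ (ω ++ ν) →
    Adm Λ (μ ++ ω ++ ν)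

/-- Irreducibility of the subshift `Λ`. -/
def IrredShift (Λ : Set (ℤ → A)) : Prop :=
  ∀ μ ν : List A, Adm Λ μ → Adm Λ ν → ∃ ξ : List A, Adm Λ (μ ++ ξ ++ ν)

/-- `Λ` is `λ`-synchronizing: it is irreducible and for every `η ∈ B_l(Λ)` and `k ≥ l`
there is `ν ∈ S_k(Λ)` with `ην ∈ S_{k-l}(Λ)`. -/
def LambdaSync (Λ : Set (ℤ → A)) : Prop :=
  IrredShift Λ ∧ ∀ (η : List A) (k : ℕ), Adm Λ η → η.length ≤ k →
    ∃ ν : List A, LSync Λ k ν ∧ LSync Λ (k - η.length) (η ++ ν)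

/-- `Γ_l^-` of a word with respect to a language `L ⊆ B^*`. -/
def GammaL {B : Type*} (L : Set (List B)) (l : ℕ) (μ : List B) : Set (List B) :=
  {ν | ν.length = l ∧ ν ∈ L ∧ ν ++ μ ∈ L}

/-- `μ` is an `l`-synchronizing word with respect to the language `L`. -/
def LSyncL {B : Type*} (L : Set (List B)) (l : ℕ) (μ : List B) : Prop :=
  μ ∈ L ∧ ∀ ω : List B, μ ++ ω ∈ L → GammaL L l μ = GammaL L l (μ ++ ω)

/-- `ξ^B`: replace every occurrence of the symbol `a1` (playing the role of `1`) by the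
word `0 1`, where the new symbol `0` is `none` and each old symbol `a` is `some a`. -/
def xiB [DecidableEq A] (a1 : A) : List A → List (Option A)
  | [] => []
  | a :: w => (if a = a1 then [none, some a1] else [some a]) ++ xiB a1 w

/-- The language `B_*(Λ̃)` of the expansion `Λ̃` of `Λ` (replacing the symbol `1 = a1` by
`01`): the factors of the `ξ^B`-images of admissible words of `Λ`. -/
def tildeLang [DecidableEq A] (Λ : Set (ℤ → A)) (a1 : A) : Set (List (Option A)) :=
  {u | ∃ w : List A, Adm Λ w ∧ u <:+: xiB a1 w}

/-- if `ν` is a `2l`-synchronizing word of the expansion `Λ̃` which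
neither begins with the symbol `1` (i.e. `some a1`) nor ends with the symbol `0`
(i.e. `none`), then `η^B(ν)` is an `l`-synchronizing word of `Λ`.  For such words
every `0` is immediately followed by a `1`, so `η^B` (replacing each `01` by `1`)
is just deletion of all `0`s, i.e. `ν.filterMap id`. -/
lemma xiB_append [DecidableEq A] (a1 : A) (u v : List A) :
    xiB a1 (u ++ v) = xiB a1 u ++ xiB a1 v := by
  induction u with
  | nil => simp [xiB]
  | cons a u ih => simp [xiB, ih]

lemma filterMap_id_xiB [DecidableEq A] (a1 : A) (w : List A) :
    (xiB a1 w).filterMap id = w := by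
  induction w with
  | nil => simp [xiB]
  | cons a w ih =>
    by_cases h : a = a1 <;> simp [xiB, h, ih] <;> exact ih

lemma xiB_length_le [DecidableEq A] (a1 : A) (w : List A) :
    (xiB a1 w).length ≤ 2 * w.length := by
  induction w with
  | nil => simp [xiB]
  | cons a w ih =>
    by_cases h : a = a1 <;> simp [xiB, h] <;> omega

lemma filterMap_infix {B C : Type*} (f : B → Option C) {u v : List B} (h : u <:+: v) :
    u.filterMap f <:+: v.filterMap f := by
  obtain ⟨s, t, rfl⟩ := h
  exact ⟨s.filterMap f, t.filterMap f, by simp [List.filterMap_append]⟩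

lemma Adm_infix {Λ : Set (ℤ → A)} {u v : List A} (h : Adm Λ v) (hi : u <:+: v) :
    Adm Λ u := by
  obtain ⟨s, t, rfl⟩ := hi
  obtain ⟨x, hx, n, hn⟩ := h
  refine ⟨x, hx, n + s.length, fun i => ?_⟩
  have hlt : s.length + (i : ℕ) < (s ++ (u ++ t)).length := by
    simp only [List.length_append]; omega
  have := hn ⟨s.length + (i : ℕ), by simpa using hlt⟩
  simp only [List.get_eq_getElem] at this ⊢
  have h2 : n + (s.length : ℤ) + ((i : ℕ) : ℤ) = n + ((s.length + (i : ℕ) : ℕ) : ℤ) := by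
    push_cast; ring
  rw [h2, this]
  have hlt2 : s.length + (i : ℕ) < (s ++ u).length := by simp only [List.length_append]; omega
  rw [List.getElem_append_left hlt2, List.getElem_append_right (by omega)]
  simp

lemma Adm_extend_left {Λ : Set (ℤ → A)} {v : List A} (h : Adm Λ v) (m : ℕ) :
    ∃ p : List A, p.length = m ∧ Adm Λ (p ++ v) := by
  obtain ⟨x, hx, n, hn⟩ := h
  refine ⟨List.ofFn (fun j : Fin m => x (n - m + j)), by simp, x, hx, n - m, fun i => ?_⟩
  have hi := i.isLt
  simp only [List.length_append, List.length_ofFn] at hi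
  simp only [List.get_eq_getElem]
  by_cases hc : (i : ℕ) < m
  · rw [List.getElem_append_left (by simpa using hc)]
    simp
  · rw [List.getElem_append_right (by simpa using hc)]
    simp only [List.length_ofFn]
    have := hn ⟨(i : ℕ) - m, by omega⟩
    simp only [List.get_eq_getElem] at this
    rw [← this]
    congr 1
    push_cast [Nat.cast_sub (by omega : m ≤ (i : ℕ))]
    ring

lemma tildeLang_infix [DecidableEq A] {Λ : Set (ℤ → A)} {a1 : A} {u u' : List (Option A)}
    (h : u ∈ tildeLang Λ a1) (hi : u' <:+: u) : u' ∈ tildeLang Λ a1 := by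
  obtain ⟨w, hw, hwi⟩ := h
  exact ⟨w, hw, hi.trans hwi⟩

lemma mem_tildeLang_adm [DecidableEq A] {Λ : Set (ℤ → A)} {a1 : A} {u : List (Option A)}
    (h : u ∈ tildeLang Λ a1) : Adm Λ (u.filterMap id) := by
  obtain ⟨w, hw, hwi⟩ := h
  have := filterMap_infix id hwi
  rw [filterMap_id_xiB] at this
  exact Adm_infix hw this

lemma xiB_length_ge [DecidableEq A] (a1 : A) (w : List A) :
    w.length ≤ (xiB a1 w).length := by
  induction w with
  | nil => simp [xiB]
  | cons a w ih => by_cases h : a = a1 <;> simp [xiB, h] <;> omega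

lemma tildeLang_extend_left [DecidableEq A] {Λ : Set (ℤ → A)} {a1 : A} {u : List (Option A)}
    (h : u ∈ tildeLang Λ a1) (m : ℕ) :
    ∃ p : List (Option A), p.length = m ∧ p ++ u ∈ tildeLang Λ a1 := by
  obtain ⟨w, hw, s, t, hst⟩ := h
  obtain ⟨p0, hp0, hadm⟩ := Adm_extend_left hw m
  set q := xiB a1 p0 ++ s with hq
  have hqlen : m ≤ q.length := by
    have := xiB_length_ge a1 p0
    simp [hq, List.length_append]; omega
  refine ⟨q.drop (q.length - m), by simp; omega, p0 ++ w, hadm, q.take (q.length - m), t, ?_⟩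
  rw [xiB_append, ← hst]
  simp only [← List.append_assoc, List.take_append_drop, hq]

lemma chain'_xiB [DecidableEq A] (a1 : A) (w : List A) :
    Chain' (fun x y => (x = none ↔ y = some a1)) (xiB a1 w) := by
  induction w with
  | nil => exact List.isChain_nil
  | cons a w ih =>
    by_cases h : a = a1
    · simp only [xiB, h, if_pos rfl]
      refine List.IsChain.cons_cons (by simp) ?_
      cases hxw : xiB a1 w with
      | nil => simp
      | cons b rest =>
        refine List.IsChain.cons_cons ?_ (by rw [← hxw]; exact ih)
        -- b is the head of xiB a1 w; need (some a1 = none ↔ b = some a1), i.e. b ≠ some a1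
        constructor
        · intro hc; exact absurd hc (by simp)
        · intro hb
          exfalso
          cases w with
          | nil => simp [xiB] at hxw
          | cons c w' =>
            by_cases hc : c = a1
            · simp [xiB, hc] at hxw
              rw [← hxw.1] at hb; simp at hb
            · simp [xiB, hc] at hxw
              rw [← hxw.1] at hb
              exact hc (by simpa using hb)
    · simp only [xiB, if_neg h]
      cases hxw : xiB a1 w with
      | nil => exact List.isChain_singleton _
      | cons b rest =>
        refine List.IsChain.cons_cons ?_ (by rw [← hxw]; exact ih)
        constructor
        · intro hc; exact absurd hc (by simp)
        · intro hb
          exfalso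
          cases w with
          | nil => simp [xiB] at hxw
          | cons c w' =>
            by_cases hc : c = a1
            · simp [xiB, hc] at hxw
              rw [← hxw.1] at hb; simp at hb
            · simp [xiB, hc] at hxw
              rw [← hxw.1] at hb
              exact hc (by simpa using hb)

lemma good_xiB [DecidableEq A] (a1 : A) :
    ∀ u : List (Option A), Chain' (fun x y => (x = none ↔ y = some a1)) u →
      u.head? ≠ some (some a1) → u.getLast? ≠ some none →
      xiB a1 (u.filterMap id) = u
  | [], _, _, _ => by simp [xiB]
  | [none], _, _, hl => by simp at hl
  | (none :: x :: rest), hc, hh, hl => by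
    have hx : x = some a1 := by
      have := (List.isChain_cons_cons.mp hc).1
      exact this.mp rfl
    subst hx
    have hc' : Chain' (fun x y => (x = none ↔ y = some a1)) rest :=
      ((List.isChain_cons_cons.mp hc).2).tail
    have hh' : rest.head? ≠ some (some a1) := by
      intro h
      cases rest with
      | nil => simp at h
      | cons y r =>
        have := (List.isChain_cons_cons.mp (List.isChain_cons_cons.mp hc).2).1
        simp at h
        rw [h] at this
        simp at this
    have hl' : rest.getLast? ≠ some none := by
      cases rest with
      | nil => simp
      | cons y r =>
        intro h
        apply hl
        rw [List.getLast?_cons_cons, List.getLast?_cons_cons]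
        exact h
    have ih := good_xiB a1 rest hc' hh' hl'
    simp only [List.filterMap_cons, id, xiB, if_pos rfl]
    rw [show (fun x : Option A => x) = id from rfl, ih]; simp
  | (some a :: rest), hc, hh, hl => by
    have ha : a ≠ a1 := by
      intro h; subst h; simp at hh
    have hc' : Chain' (fun x y => (x = none ↔ y = some a1)) rest := hc.tail
    have hh' : rest.head? ≠ some (some a1) := by
      intro h
      cases rest with
      | nil => simp at h
      | cons y r =>
        have := (List.isChain_cons_cons.mp hc).1
        simp at h
        rw [h] at this
        simp at this
    have hl' : rest.getLast? ≠ some none := by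
      cases rest with
      | nil => simp
      | cons y r =>
        intro h
        apply hl
        rw [List.getLast?_cons_cons]
        exact h
    have ih := good_xiB a1 rest hc' hh' hl'
    simp only [List.filterMap_cons, id, xiB, if_neg ha]
    rw [show (fun x : Option A => x) = id from rfl, ih]; simp

theorem etaB_lSync [TopologicalSpace A] [DiscreteTopology A] [Finite A] [DecidableEq A]
    (Λ : Set (ℤ → A)) (hΛ : IsSubshift Λ) (a1 : A) (hirr : IrredShift Λ)
    (l : ℕ) (ν : List (Option A))
    (hν : LSyncL (tildeLang Λ a1) (2 * l) ν)
    (hhead : ν.head? ≠ some (some a1)) (hlast : ν.getLast? ≠ some none) :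
    LSync Λ l (ν.filterMap id) := by
  obtain ⟨hνL, hsync⟩ := hν
  set μ0 := ν.filterMap id with hμ0
  have hchain : Chain' (fun x y => (x = none ↔ y = some a1)) ν := by
    obtain ⟨w, hw, hi⟩ := hνL
    exact (chain'_xiB a1 w).infix hi
  have hgood : xiB a1 μ0 = ν := good_xiB a1 ν hchain hhead hlast
  constructor
  · exact mem_tildeLang_adm hνL
  · intro ω hω
    have hνω : ν ++ xiB a1 ω ∈ tildeLang Λ a1 := by
      have h : xiB a1 (μ0 ++ ω) ∈ tildeLang Λ a1 := ⟨μ0 ++ ω, hω, List.infix_refl _⟩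
      rwa [xiB_append, hgood] at h
    have hGam := hsync (xiB a1 ω) hνω
    ext κ
    simp only [Gamma, Set.mem_setOf_eq]
    constructor
    · rintro ⟨hlen, hκAdm, hκν⟩
      refine ⟨hlen, hκAdm, ?_⟩
      have h1 : xiB a1 κ ++ ν ∈ tildeLang Λ a1 := by
        have h : xiB a1 (κ ++ μ0) ∈ tildeLang Λ a1 := ⟨κ ++ μ0, hκν, List.infix_refl _⟩
        rwa [xiB_append, hgood] at h
      have hκle : (xiB a1 κ).length ≤ 2 * l := by
        have := xiB_length_le a1 κ; omega
      obtain ⟨p, hp, hpL⟩ := tildeLang_extend_left h1 (2 * l - (xiB a1 κ).length)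
      have hmem : p ++ xiB a1 κ ∈ GammaL (tildeLang Λ a1) (2 * l) ν := by
        refine ⟨by simp only [List.length_append]; omega, ?_, ?_⟩
        · exact tildeLang_infix hpL ⟨[], ν, by simp⟩
        · rwa [List.append_assoc]
      rw [hGam] at hmem
      obtain ⟨-, -, hfull⟩ := hmem
      have hadm := mem_tildeLang_adm hfull
      have he : ((p ++ xiB a1 κ) ++ (ν ++ xiB a1 ω)).filterMap id
          = p.filterMap id ++ (κ ++ (μ0 ++ ω)) := by
        simp only [List.filterMap_append, filterMap_id_xiB, hμ0, List.append_assoc]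
      rw [he] at hadm
      exact Adm_infix hadm ⟨p.filterMap id, [], by simp⟩
    · rintro ⟨hlen, hκAdm, hfull⟩
      exact ⟨hlen, hκAdm, Adm_infix hfull ⟨[], ω, by simp⟩⟩
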